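/- Let D be an integral domain, ⋆ a semistar operation on D, and let v(D^⋆) be the semistar operation on D defined by E^{v(D^⋆)} := (D^⋆ : (D^⋆ : E)) for each E ∈ F̄(D). If D is a ⋆-domain, then D is a v(D^⋆)-domain and ⋆_f = (v(D^⋆))_f. -/

import Mathlib

open Submodule

namespace Semistar

/-- A semistar operation on an integral domain `D` with quotient field `K`:
a map on `D`-submodules of `K` satisfying the semistar axioms on nonzero submodules. -/
structure SemistarOp (D K : Type*) [CommRing D] [Field K] [Algebra D K] where
  star : Submodule D K → Submodule D K
  star_smul_mul : ∀ x : K, x ≠ 0 → ∀ E : Submodule D K, E ≠ ⊥ →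
    star (span D {x} * E) = span D {x} * star E
  star_mono : ∀ E F : Submodule D K, E ≠ ⊥ → F ≠ ⊥ → E ≤ F → star E ≤ star F
  le_star : ∀ E : Submodule D K, E ≠ ⊥ → E ≤ star E
  star_star : ∀ E : Submodule D K, E ≠ ⊥ → star (star E) = star E

variable {D K : Type*} [CommRing D] [Field K] [Algebra D K]

/-- The finite-type semistar operation `⋆_f` associated to `⋆`. -/
def finStar (t : Submodule D K → Submodule D K) : Submodule D K → Submodule D K :=
  fun E => ⨆ F ∈ {F : Submodule D K | F ≠ ⊥ ∧ F.FG ∧ F ≤ E}, t F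

/-- The image in `K` of an ideal of `D`. -/
def idealToK (I : Ideal D) : Submodule D K :=
  Submodule.map (Algebra.linearMap D K) I

/-- `I` is a quasi-`⋆`-ideal: a nonzero ideal of `D` with `I^⋆ ∩ D = I`. -/
def IsQuasiIdeal (t : Submodule D K → Submodule D K) (I : Ideal D) : Prop :=
  I ≠ ⊥ ∧ t (idealToK I) ⊓ 1 = idealToK I

/-- `M` is a quasi-`⋆`-maximal ideal: maximal among quasi-`⋆`-ideals. -/
def IsQuasiMaximal (t : Submodule D K → Submodule D K) (M : Ideal D) : Prop :=
  IsQuasiIdeal t M ∧ ∀ J : Ideal D, IsQuasiIdeal t J → M ≤ J → M = J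

/-- The localization `E·D_M` of a submodule `E` of `K` at (the complement of) an ideal `M`. -/
def locAt (M : Ideal D) (E : Submodule D K) : Submodule D K where
  carrier := {x : K | ∃ s ∈ Submonoid.closure ((M : Set D)ᶜ), s • x ∈ E}
  add_mem' := by
    rintro x y ⟨s, hs, hsx⟩ ⟨t, ht, hty⟩
    refine ⟨s * t, mul_mem hs ht, ?_⟩
    have h1 : (s * t) • x ∈ E := by rw [mul_comm, mul_smul]; exact E.smul_mem t hsx
    have h2 : (s * t) • y ∈ E := by rw [mul_smul]; exact E.smul_mem s hty
    rw [smul_add]; exact E.add_mem h1 h2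
  zero_mem' := ⟨1, Submonoid.one_mem _, by simp⟩
  smul_mem' := by
    rintro c x ⟨s, hs, hsx⟩
    exact ⟨s, hs, by rw [smul_comm]; exact E.smul_mem c hsx⟩

/-- The spectral semistar operation `⋆̃` associated to `⋆`, defined by
`E^⋆̃ = ⋂ { E·D_M : M quasi-`⋆_f`-maximal }`. -/
def tildeStar (s : SemistarOp D K) : Submodule D K → Submodule D K :=
  fun E => ⨅ M ∈ {M : Ideal D | IsQuasiMaximal (finStar s.star) M}, locAt M E

/-- The localizing system `F^⋆` of ideals `I` with `I^⋆ = D^⋆`. -/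
def starLS (s : SemistarOp D K) : Set (Ideal D) :=
  {I : Ideal D | I ≠ ⊥ ∧ s.star (idealToK I) = s.star 1}

/-- The stable semistar operation `⋆̄` associated to `⋆`:
`E^⋆̄ = ⋃ {(E : J) : J ∈ F^⋆}`. -/
def barStar (s : SemistarOp D K) : Submodule D K → Submodule D K :=
  fun E => ⨆ J ∈ starLS s, E / idealToK J

/-- `I` is `⋆`-invertible: `(I·I⁻¹)^⋆ = D^⋆`. -/
def IsStarInvertible (t : Submodule D K → Submodule D K) (I : Submodule D K) : Prop :=
  t (I * (1 / I)) = t 1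

/-- `D` is a `⋆`-domain: every nonzero finitely generated `D`-submodule of `K`
is `⋆`-invertible. -/
def IsStarDomain (t : Submodule D K → Submodule D K) : Prop :=
  ∀ I : Submodule D K, I ≠ ⊥ → I.FG → IsStarInvertible t I

/-- `D` is a Prüfer `⋆`-multiplication domain: every nonzero finitely generated
ideal of `D` is `⋆_f`-invertible. -/
def IsPMD (t : Submodule D K → Submodule D K) : Prop :=
  ∀ I : Submodule D K, I ≠ ⊥ → I.FG → I ≤ 1 → IsStarInvertible (finStar t) I

/-- `D` is a P⋆MD for the semistar operation `s`. -/
abbrev IsPStarMD (s : SemistarOp D K) : Prop := IsPMD s.star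

/-- Equality of two semistar operations (as maps on nonzero submodules):
`D` is a `(∗₁, ∗₂)`-domain. -/
def StarEq (t₁ t₂ : Submodule D K → Submodule D K) : Prop :=
  ∀ E : Submodule D K, E ≠ ⊥ → t₁ E = t₂ E

/-- `⋆` is a.b. -/
def IsAB (t : Submodule D K → Submodule D K) : Prop :=
  ∀ E : Submodule D K, E ≠ ⊥ → E.FG → ∀ F G : Submodule D K, F ≠ ⊥ → G ≠ ⊥ →
    t (E * F) ≤ t (E * G) → t F ≤ t G

/-- `⋆` is e.a.b. -/
def IsEAB (t : Submodule D K → Submodule D K) : Prop :=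
  ∀ E F G : Submodule D K, E ≠ ⊥ → E.FG → F ≠ ⊥ → F.FG → G ≠ ⊥ → G.FG →
    t (E * F) ≤ t (E * G) → t F ≤ t G

/-- `D` is quasi-`⋆`-integrally closed: `D^⋆ = ⋃ {(F^⋆ : F^⋆) : F ∈ f(D)}`. -/
def IsQuasiStarIntegrallyClosed (t : Submodule D K → Submodule D K) : Prop :=
  (t 1 : Set K) = ⋃ F ∈ {F : Submodule D K | F ≠ ⊥ ∧ F.FG}, ((t F / t F : Submodule D K) : Set K)

/-- The submodule `S` of `K` is integrally closed in `K`. -/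
def IsIntegrallyClosedIn (S : Submodule D K) : Prop :=
  ∀ x : K, (∃ p : Polynomial K, p.Monic ∧ (∀ i, p.coeff i ∈ S) ∧ Polynomial.eval x p = 0) → x ∈ S

/-- `D` is `⋆`-Noetherian: ACC on quasi-`⋆`-ideals. -/
def IsStarNoetherian (t : Submodule D K → Submodule D K) : Prop :=
  ∀ c : ℕ → Ideal D, (∀ n, IsQuasiIdeal t (c n)) → Monotone c →
    ∃ n, ∀ m, n ≤ m → c m = c n

/-- `D` is `⋆`-extracoherent. -/
def IsExtraCoherent (t : Submodule D K → Submodule D K) : Prop :=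
  ∀ E F : Submodule D K, E ≠ ⊥ → E.FG → F ≠ ⊥ → F.FG → E ⊓ F ≠ ⊥ →
    ∃ J : Submodule D K, J ≠ ⊥ ∧ J.FG ∧ J ≤ E ⊓ F ∧ t J = t E ⊓ t F

/-- `D` is truly `⋆`-coherent. -/
def IsTrulyCoherent (t : Submodule D K → Submodule D K) : Prop :=
  ∀ E F : Submodule D K, E ≠ ⊥ → E.FG → F ≠ ⊥ → F.FG → E ⊓ F ≠ ⊥ →
    ∃ J : Submodule D K, J ≠ ⊥ ∧ J.FG ∧ t J = t (E ⊓ F)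

/-- `D` is `⋆`-coherent. -/
def IsCoherent (t : Submodule D K → Submodule D K) : Prop :=
  ∀ E F : Submodule D K, E ≠ ⊥ → E.FG → F ≠ ⊥ → F.FG → E ⊓ F ≠ ⊥ →
    ∃ J : Submodule D K, J ≠ ⊥ ∧ J.FG ∧ t J = t E ⊓ t F

/-- `D` is `⋆`-quasi-coherent. -/
def IsQuasiCoherent (t : Submodule D K → Submodule D K) : Prop :=
  ∀ F : Submodule D K, F ≠ ⊥ → F.FG →
    ∃ G : Submodule D K, G ≠ ⊥ ∧ G.FG ∧ t ((1 : Submodule D K) / F) = t G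

/-- `D` is an `H(⋆)`-domain. -/
def IsHDomain (t : Submodule D K → Submodule D K) : Prop :=
  ∀ I : Ideal D, I ≠ ⊥ → t (idealToK I) = t 1 →
    ∃ J : Ideal D, J ≠ ⊥ ∧ J.FG ∧ J ≤ I ∧ t (idealToK J) = t 1

/-- `D` is an `I(⋆)`-domain. -/
def IsIDomain (s : SemistarOp D K) : Prop :=
  ∀ I : Submodule D K, I ≠ ⊥ → I.FG → I ≤ 1 →
    (IsStarInvertible s.star I ↔ IsStarInvertible (finStar s.star) I)



section Aux
set_option linter.unusedSectionVars false
variable {D K : Type*} [CommRing D] [IsDomain D] [Field K] [Algebra D K] [IsFractionRing D K]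

lemma aux_one_ne_bot : (1 : Submodule D K) ≠ ⊥ :=
  (Submodule.ne_bot_iff _).mpr ⟨1, one_le.mp le_rfl, one_ne_zero⟩

lemma aux_mul_ne_bot {A B : Submodule D K} (hA : A ≠ ⊥) (hB : B ≠ ⊥) : A * B ≠ ⊥ := by
  obtain ⟨a, ha, ha0⟩ := (Submodule.ne_bot_iff _).mp hA
  obtain ⟨b, hb, hb0⟩ := (Submodule.ne_bot_iff _).mp hB
  exact (Submodule.ne_bot_iff _).mpr ⟨a * b, Submodule.mul_mem_mul ha hb, mul_ne_zero ha0 hb0⟩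

lemma aux_span_ne_bot {x : K} (hx : x ≠ 0) : span D {x} ≠ ⊥ :=
  (Submodule.ne_bot_iff _).mpr ⟨x, mem_span_singleton_self x, hx⟩

lemma aux_star_mul_le (s : SemistarOp D K) {A : Submodule D K} (hA : A ≠ ⊥)
    (B : Submodule D K) : s.star A * B ≤ s.star (A * B) := by
  rw [Submodule.mul_le]
  intro x hx b hb
  by_cases hb0 : b = 0
  · subst hb0; rw [mul_zero]; exact zero_mem _
  have hB : B ≠ ⊥ := fun e => hb0 (by rw [e] at hb; simpa using hb)
  have h1 : x * b ∈ span D {b} * s.star A :=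
    Submodule.mul_mem_mul_rev (mem_span_singleton_self b) hx
  rw [← s.star_smul_mul b hb0 A hA] at h1
  have h2 : span D {b} * A ≤ A * B := by
    rw [mul_comm]
    exact mul_le_mul' le_rfl (span_le.mpr (by simpa using hb))
  exact s.star_mono _ _ (aux_mul_ne_bot (aux_span_ne_bot hb0) hA) (aux_mul_ne_bot hA hB) h2 h1

lemma aux_one_le_star_one (s : SemistarOp D K) : (1 : Submodule D K) ≤ s.star 1 :=
  s.le_star 1 aux_one_ne_bot

lemma aux_star_one_ne_bot (s : SemistarOp D K) : s.star 1 ≠ ⊥ :=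
  fun e => aux_one_ne_bot (le_bot_iff.mp (e ▸ aux_one_le_star_one s))

lemma aux_star_ne_bot (s : SemistarOp D K) {E : Submodule D K} (hE : E ≠ ⊥) : s.star E ≠ ⊥ :=
  fun e => hE (le_bot_iff.mp (e ▸ s.le_star E hE))

lemma aux_star1_mul_star1 (s : SemistarOp D K) : s.star 1 * s.star 1 ≤ s.star 1 := by
  have h1 := aux_star_mul_le s aux_one_ne_bot (s.star 1)
  rwa [one_mul, s.star_star 1 aux_one_ne_bot] at h1

lemma aux_one_mem_star_one (s : SemistarOp D K) : (1 : K) ∈ s.star 1 :=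
  aux_one_le_star_one s (one_le.mp le_rfl)

lemma aux_star1_div_one (s : SemistarOp D K) : s.star 1 / (1 : Submodule D K) = s.star 1 := by
  apply le_antisymm
  · intro x hx
    have := mem_div_iff_forall_mul_mem.mp hx 1 (one_le.mp le_rfl)
    rwa [mul_one] at this
  · intro x hx
    rw [mem_div_iff_forall_mul_mem]
    intro y hy
    obtain ⟨d, rfl⟩ := Submodule.mem_one.mp hy
    rw [mul_comm, ← Algebra.smul_def]
    exact smul_mem _ d hx

lemma aux_star1_div_star1 (s : SemistarOp D K) : s.star 1 / s.star 1 = s.star 1 := by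
  apply le_antisymm
  · intro x hx
    have := mem_div_iff_forall_mul_mem.mp hx 1 (aux_one_mem_star_one s)
    rwa [mul_one] at this
  · intro x hx
    rw [mem_div_iff_forall_mul_mem]
    intro y hy
    exact aux_star1_mul_star1 s (Submodule.mul_mem_mul hx hy)

lemma aux_v_one (s : SemistarOp D K) :
    s.star 1 / (s.star 1 / (1 : Submodule D K)) = s.star 1 := by
  rw [aux_star1_div_one, aux_star1_div_star1]

lemma aux_v_star_one (s : SemistarOp D K) :
    s.star 1 / (s.star 1 / s.star 1) = s.star 1 := by
  rw [aux_star1_div_star1, aux_star1_div_star1]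

lemma aux_v_mono (s : SemistarOp D K) {E F : Submodule D K} (hEF : E ≤ F) :
    s.star 1 / (s.star 1 / E) ≤ s.star 1 / (s.star 1 / F) := by
  intro x hx
  rw [mem_div_iff_forall_mul_mem]
  intro y hy
  refine mem_div_iff_forall_mul_mem.mp hx y ?_
  rw [mem_div_iff_forall_mul_mem]
  exact fun e he => mem_div_iff_forall_mul_mem.mp hy e (hEF he)

lemma aux_star_le_v (s : SemistarOp D K) {E : Submodule D K} (hE : E ≠ ⊥) :
    s.star E ≤ s.star 1 / (s.star 1 / E) := by
  intro x hx
  rw [mem_div_iff_forall_mul_mem]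
  intro y hy
  by_cases hy0 : y = 0
  · subst hy0; rw [mul_zero]; exact zero_mem _
  have h1 : span D {y} * E ≤ s.star 1 := by
    rw [Submodule.mul_le]
    intro a ha e he
    obtain ⟨c, rfl⟩ := mem_span_singleton.mp ha
    rw [smul_mul_assoc]
    exact smul_mem _ c (mem_div_iff_forall_mul_mem.mp hy e he)
  have h2 : x * y ∈ span D {y} * s.star E :=
    Submodule.mul_mem_mul_rev (mem_span_singleton_self y) hx
  rw [← s.star_smul_mul y hy0 E hE] at h2
  have h3 := s.star_mono _ _ (aux_mul_ne_bot (aux_span_ne_bot hy0) hE)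
    (aux_star_one_ne_bot s) h1 h2
  rwa [s.star_star 1 aux_one_ne_bot] at h3

lemma aux_one_div_ne_bot {F : Submodule D K} (hne : F ≠ ⊥) (hfg : F.FG) :
    (1 : Submodule D K) / F ≠ ⊥ := by
  obtain ⟨S, rfl⟩ := hfg
  obtain ⟨b, hb⟩ := IsLocalization.exist_integer_multiples_of_finset
    (nonZeroDivisors D) S
  refine (Submodule.ne_bot_iff _).mpr ⟨algebraMap D K b, ?_, ?_⟩
  · rw [mem_div_iff_forall_mul_mem]
    intro y hy
    have hle : span D (S : Set K) ≤
        Submodule.comap (LinearMap.mulLeft D (algebraMap D K b)) 1 := by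
      rw [span_le]
      intro a haS
      obtain ⟨d, hd⟩ := hb a haS
      refine Submodule.mem_comap.mpr (Submodule.mem_one.mpr ⟨d, ?_⟩)
      rw [hd, Algebra.smul_def]
      rfl
    have := hle hy
    rw [Submodule.mem_comap] at this
    exact this
  · rw [Ne, IsFractionRing.to_map_eq_zero_iff]
    exact nonZeroDivisors.coe_ne_zero b

lemma aux_v_le_star (s : SemistarOp D K)
    (h : ∀ I : Submodule D K, I ≠ ⊥ → I.FG → s.star (I * (1 / I)) = s.star 1)
    {F : Submodule D K} (hne : F ≠ ⊥) (hfg : F.FG) :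
    s.star 1 / (s.star 1 / F) ≤ s.star F := by
  intro x hx
  by_cases hx0 : x = 0
  · subst hx0; exact zero_mem _
  have hdne : (1 : Submodule D K) / F ≠ ⊥ := aux_one_div_ne_bot hne hfg
  have step1 : span D {x} * ((1 : Submodule D K) / F) ≤ s.star 1 := by
    rw [Submodule.mul_le]
    intro a ha b hb
    obtain ⟨c, rfl⟩ := mem_span_singleton.mp ha
    rw [smul_mul_assoc]
    refine smul_mem _ c (mem_div_iff_forall_mul_mem.mp hx b ?_)
    rw [mem_div_iff_forall_mul_mem]
    exact fun e he => aux_one_le_star_one s (mem_div_iff_forall_mul_mem.mp hb e he)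
  have hJne : (1 : Submodule D K) / F * F ≠ ⊥ := aux_mul_ne_bot hdne hne
  have step2 : span D {x} * ((1 : Submodule D K) / F * F) ≤ s.star 1 * F := by
    rw [← mul_assoc]
    exact mul_le_mul' step1 le_rfl
  have step3 := s.star_mono _ _ (aux_mul_ne_bot (aux_span_ne_bot hx0) hJne)
    (aux_mul_ne_bot (aux_star_one_ne_bot s) hne) step2
  rw [s.star_smul_mul x hx0 _ hJne, mul_comm ((1 : Submodule D K) / F) F,
    h F hne hfg] at step3
  have step5 : s.star (s.star 1 * F) = s.star F := by
    apply le_antisymm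
    · have h1 : s.star 1 * F ≤ s.star F := by
        have := aux_star_mul_le s aux_one_ne_bot F
        rwa [one_mul] at this
      have h2 := s.star_mono _ _ (aux_mul_ne_bot (aux_star_one_ne_bot s) hne)
        (aux_star_ne_bot s hne) h1
      rwa [s.star_star F hne] at h2
    · refine s.star_mono _ _ hne (aux_mul_ne_bot (aux_star_one_ne_bot s) hne) ?_
      calc F = 1 * F := (one_mul F).symm
        _ ≤ s.star 1 * F := mul_le_mul' (aux_one_le_star_one s) le_rfl
  rw [step5] at step3
  refine step3 ?_
  have := Submodule.mul_mem_mul (mem_span_singleton_self x) (aux_one_mem_star_one s)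
  rwa [mul_one] at this

end Aux

theorem statement1 {D K : Type*} [CommRing D] [IsDomain D] [Field K] [Algebra D K]
    [IsFractionRing D K] (s : SemistarOp D K)
    (h : IsStarDomain s.star) :
    IsStarDomain (fun E : Submodule D K => s.star 1 / (s.star 1 / E)) ∧
    StarEq (finStar s.star) (finStar (fun E : Submodule D K => s.star 1 / (s.star 1 / E))) := by
  have h' : ∀ I : Submodule D K, I ≠ ⊥ → I.FG → s.star (I * (1 / I)) = s.star 1 :=
    fun I hne hfg => h I hne hfg
  constructor
  · intro I hne hfg
    show s.star 1 / (s.star 1 / (I * (1 / I))) = s.star 1 / (s.star 1 / 1)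
    rw [aux_v_one]
    have hJne : I * ((1 : Submodule D K) / I) ≠ ⊥ :=
      aux_mul_ne_bot hne (aux_one_div_ne_bot hne hfg)
    apply le_antisymm
    · have h1 := aux_v_mono s (s.le_star _ hJne)
      rw [h' I hne hfg] at h1
      calc s.star 1 / (s.star 1 / (I * (1 / I)))
          ≤ s.star 1 / (s.star 1 / s.star 1) := h1
        _ = s.star 1 := aux_v_star_one s
    · calc s.star 1 = s.star (I * (1 / I)) := (h' I hne hfg).symm
        _ ≤ _ := aux_star_le_v s hJne
  · intro E _
    show (⨆ F ∈ {F : Submodule D K | F ≠ ⊥ ∧ F.FG ∧ F ≤ E}, s.star F) =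
      ⨆ F ∈ {F : Submodule D K | F ≠ ⊥ ∧ F.FG ∧ F ≤ E}, s.star 1 / (s.star 1 / F)
    refine iSup_congr fun F => ?_
    by_cases hF : F ∈ {F : Submodule D K | F ≠ ⊥ ∧ F.FG ∧ F ≤ E}
    · rw [iSup_pos hF, iSup_pos hF]
      exact le_antisymm (aux_star_le_v s hF.1) (aux_v_le_star s h' hF.1 hF.2.1)
    · rw [iSup_neg hF, iSup_neg hF]


end Semistar
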